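/- arXiv:1608.05997 — 2 statements merged into one kernel-verified Lean document; each statement's English description precedes it below -/
import Mathlib

section
/- (Proposition 1, SINR saturation of frequency-domain combiners.) For every subcarrier index p ∈ {0,…,N−1}: (τ_av/N)² + Σ_{q=0, q≠p}^{N−1} ( |(1 − ρ̄(q−p)) / (N·(1 − e^{2πi(q−p)/N}))|² + |(ρ̄(q−p) − 1) / (N·(1 − e^{2πi(q−p)/N}))|² ) = (τ_av/N)² + Σ_{η=1}^{N−1} |1 − ρ̄(η)|² / (2N² sin²(πη/N)). Consequently, the asymptotic SINR of the conventional frequency-domain combiners in OFDM without CP, namely (1 − τ_av/N)² divided by the left-hand side above, equals (1 − τ_av/N)² / ( (τ_av/N)² + Σ_{η=1}^{N−1} |1 − ρ̄(η)|² / (2N² sin²(πη/N)) ), a value independent of p. -/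
open Finset

/-- Average delay spread `τ_av = ∑_{ℓ=0}^{L-1} ℓ·ρ(ℓ)`. -/
noncomputable def tauAv (L : ℕ) (ρ : ℕ → ℝ) : ℝ := ∑ ℓ ∈ range L, (ℓ : ℝ) * ρ ℓ

/-- DFT of the power delay profile: `ρ̄(η) = ∑_{ℓ=0}^{L-1} ρ(ℓ)·e^{-2πiℓη/N}`. -/
noncomputable def rhoBar (N L : ℕ) (ρ : ℕ → ℝ) (η : ℤ) : ℂ :=
  ∑ ℓ ∈ range L, (ρ ℓ : ℂ) *
    Complex.exp (-(2 * (Real.pi : ℂ) * Complex.I * (ℓ : ℂ) * (η : ℂ)) / (N : ℂ))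

/-- Interference power as written on the left-hand side (sum over subcarriers `q ≠ p`
of the squared magnitudes of the asymptotic ICI and ISI coefficients). -/
noncomputable def lhsIntf (N L : ℕ) (ρ : ℕ → ℝ) (p : ℕ) : ℝ :=
  ∑ q ∈ (range N).erase p,
    (‖(1 - rhoBar N L ρ ((q : ℤ) - (p : ℤ))) /
        ((N : ℂ) * (1 - Complex.exp (2 * (Real.pi : ℂ) * Complex.I *
          (((q : ℤ) - (p : ℤ) : ℤ) : ℂ) / (N : ℂ))))‖ ^ 2
    + ‖(rhoBar N L ρ ((q : ℤ) - (p : ℤ)) - 1) /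
        ((N : ℂ) * (1 - Complex.exp (2 * (Real.pi : ℂ) * Complex.I *
          (((q : ℤ) - (p : ℤ) : ℤ) : ℂ) / (N : ℂ))))‖ ^ 2)

/-- Interference power as written on the right-hand side (sum over `η = 1, …, N-1`). -/
noncomputable def rhsIntf (N L : ℕ) (ρ : ℕ → ℝ) : ℝ :=
  ∑ η ∈ Finset.Icc 1 (N - 1),
    ‖1 - rhoBar N L ρ (η : ℤ)‖ ^ 2 /
      (2 * (N : ℝ) ^ 2 * Real.sin (Real.pi * (η : ℝ) / (N : ℝ)) ^ 2)

lemma exp_period (N : ℕ) (hN : 0 < N) (m k : ℤ) :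
    Complex.exp (2 * (Real.pi : ℂ) * Complex.I * ((m + N * k : ℤ) : ℂ) / (N : ℂ))
      = Complex.exp (2 * (Real.pi : ℂ) * Complex.I * ((m : ℤ) : ℂ) / (N : ℂ)) := by
  have hN' : (N : ℂ) ≠ 0 := Nat.cast_ne_zero.mpr hN.ne'
  have h : (2 * (Real.pi : ℂ) * Complex.I * ((m + N * k : ℤ) : ℂ) / (N : ℂ))
      = (2 * (Real.pi : ℂ) * Complex.I * ((m : ℤ) : ℂ) / (N : ℂ))
        + (k : ℤ) * (2 * (Real.pi : ℂ) * Complex.I) := by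
    push_cast
    field_simp
  rw [h, Complex.exp_add, Complex.exp_int_mul_two_pi_mul_I, mul_one]

lemma rhoBar_period (N L : ℕ) (hN : 0 < N) (ρ : ℕ → ℝ) (m k : ℤ) :
    rhoBar N L ρ (m + N * k) = rhoBar N L ρ m := by
  have hN' : (N : ℂ) ≠ 0 := Nat.cast_ne_zero.mpr hN.ne'
  unfold rhoBar
  refine Finset.sum_congr rfl fun ℓ _ => ?_
  congr 1
  have h : (-(2 * (Real.pi : ℂ) * Complex.I * (ℓ : ℂ) * ((m + N * k : ℤ) : ℂ)) / (N : ℂ))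
      = (-(2 * (Real.pi : ℂ) * Complex.I * (ℓ : ℂ) * ((m : ℤ) : ℂ)) / (N : ℂ))
        + ((-(ℓ * k) : ℤ) : ℂ) * (2 * (Real.pi : ℂ) * Complex.I) := by
    push_cast
    field_simp
    ring
  rw [h, Complex.exp_add, Complex.exp_int_mul_two_pi_mul_I, mul_one]

lemma abs_one_sub_exp (N : ℕ) (hN : 0 < N) (m : ℕ) :
    ‖1 - Complex.exp (2 * (Real.pi : ℂ) * Complex.I * ((m : ℤ) : ℂ) / (N : ℂ))‖ ^ 2
      = 4 * Real.sin (Real.pi * (m : ℝ) / (N : ℝ)) ^ 2 := by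
  have hN' : (N : ℂ) ≠ 0 := Nat.cast_ne_zero.mpr hN.ne'
  set θ : ℝ := 2 * Real.pi * m / N with hθ
  have h1 : (2 * (Real.pi : ℂ) * Complex.I * ((m : ℤ) : ℂ) / (N : ℂ)) = (θ : ℂ) * Complex.I := by
    rw [hθ]; push_cast; field_simp
  rw [h1, Complex.exp_mul_I]
  have h2 : (1 : ℂ) - ((Complex.cos θ) + (Complex.sin θ) * Complex.I)
      = ((1 - Real.cos θ : ℝ) : ℂ) + ((-Real.sin θ : ℝ) : ℂ) * Complex.I := by
    push_cast [Complex.ofReal_cos, Complex.ofReal_sin]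
    ring
  rw [h2, Complex.sq_norm, Complex.normSq_add_mul_I]
  have h3 : Real.sin (Real.pi * m / N) = Real.sin (θ / 2) := by
    congr 1; rw [hθ]; ring
  rw [h3]
  have h4 := Real.sin_sq_eq_half_sub (θ / 2)
  rw [show 2 * (θ / 2) = θ by ring] at h4
  nlinarith [Real.sin_sq_add_cos_sq θ]

lemma term_eq (N L : ℕ) (hN : 2 ≤ N) (ρ : ℕ → ℝ) (η : ℤ) (m : ℕ)
    (hm1 : 1 ≤ m) (hm2 : m < N) (k : ℤ) (hk : η = (m : ℤ) + N * k) :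
    ‖(1 - rhoBar N L ρ η) /
        ((N : ℂ) * (1 - Complex.exp (2 * (Real.pi : ℂ) * Complex.I * (η : ℂ) / (N : ℂ))))‖ ^ 2
    + ‖(rhoBar N L ρ η - 1) /
        ((N : ℂ) * (1 - Complex.exp (2 * (Real.pi : ℂ) * Complex.I * (η : ℂ) / (N : ℂ))))‖ ^ 2
    = ‖1 - rhoBar N L ρ (m : ℤ)‖ ^ 2 /
        (2 * (N : ℝ) ^ 2 * Real.sin (Real.pi * (m : ℝ) / (N : ℝ)) ^ 2) := by
  have hN0 : 0 < N := by omega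
  subst hk
  rw [rhoBar_period N L hN0 ρ m k, exp_period N hN0 m k]
  have hsub : ‖rhoBar N L ρ (m : ℤ) - 1‖
      = ‖1 - rhoBar N L ρ (m : ℤ)‖ := norm_sub_rev _ _
  set A := ‖1 - rhoBar N L ρ (m : ℤ)‖ with hA
  set E := ‖1 - Complex.exp (2 * (Real.pi : ℂ) * Complex.I * ((m : ℤ) : ℂ) / (N : ℂ))‖
    with hE
  set S := Real.sin (Real.pi * (m : ℝ) / (N : ℝ)) with hSdef
  have hNr : (0 : ℝ) < N := by exact_mod_cast hN0
  have hmr : (0 : ℝ) < m := by exact_mod_cast hm1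
  have hSpos : 0 < S := by
    apply Real.sin_pos_of_pos_of_lt_pi
    · exact div_pos (mul_pos Real.pi_pos hmr) hNr
    · rw [div_lt_iff₀ hNr]
      have : (m : ℝ) < N := by exact_mod_cast hm2
      nlinarith [Real.pi_pos]
  have hE2 : E ^ 2 = 4 * S ^ 2 := abs_one_sub_exp N hN0 m
  rw [norm_div, norm_div, norm_mul, Complex.norm_natCast, hsub, ← hA, ← hE]
  rw [div_pow, mul_pow, hE2]
  have hS : S ≠ 0 := hSpos.ne'
  field_simp
  ring

/-- Proposition 1 (SINR saturation of conventional frequency-domain combiners in OFDM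
without CP): the interference power expression is independent of the subcarrier `p`, and
the asymptotic SINR equals the stated closed form. -/
theorem stmt0 (N L : ℕ) (hN : 2 ≤ N) (hL1 : 1 ≤ L) (hLN : L ≤ N)
    (ρ : ℕ → ℝ) (hnn : ∀ ℓ, 0 ≤ ρ ℓ) (hsum : ∑ ℓ ∈ range L, ρ ℓ = 1)
    (p : ℕ) (hp : p < N) :
    ((tauAv L ρ / N) ^ 2 + lhsIntf N L ρ p
        = (tauAv L ρ / N) ^ 2 + rhsIntf N L ρ)
    ∧ ((1 - tauAv L ρ / N) ^ 2 / ((tauAv L ρ / N) ^ 2 + lhsIntf N L ρ p)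
        = (1 - tauAv L ρ / N) ^ 2 / ((tauAv L ρ / N) ^ 2 + rhsIntf N L ρ)) := by
  have hN0 : 0 < N := by omega
  have key : lhsIntf N L ρ p = rhsIntf N L ρ := by
    unfold lhsIntf rhsIntf
    refine Finset.sum_bij' (fun q _ => if p ≤ q then q - p else q + N - p)
      (fun m _ => if p + m < N then p + m else p + m - N) ?_ ?_ ?_ ?_ ?_
    · intro q hq
      simp only [Finset.mem_erase, Finset.mem_range] at hq
      simp only [Finset.mem_Icc]
      split_ifs <;> omega
    · intro m hm
      simp only [Finset.mem_Icc] at hm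
      simp only [Finset.mem_erase, Finset.mem_range]
      split_ifs <;> omega
    · intro q hq
      simp only [Finset.mem_erase, Finset.mem_range] at hq
      split_ifs <;> omega
    · intro m hm
      simp only [Finset.mem_Icc] at hm
      split_ifs <;> omega
    · intro q hq
      simp only [Finset.mem_erase, Finset.mem_range] at hq
      by_cases hpq : p ≤ q
      · rw [if_pos hpq]
        exact term_eq N L hN ρ _ (q - p) (by omega) (by omega) 0 (by omega)
      · rw [if_neg hpq]
        exact term_eq N L hN ρ _ (q + N - p) (by omega) (by omega) (-1) (by omega)
  exact ⟨by rw [key], by rw [key]⟩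
end

section
/- (Equation (20), cross-user case: covariance of the time-reversal effective channel.) Suppose k ≠ j and the family of taps of user k, (h_{m,k}(t))_{m,t}, is independent of the family of taps of user j, (h_{m,j}(t))_{m,t}, with all fourth-order products of taps integrable. Then for all ℓ, ℓ' ∈ {−(L−1),…,L−1}: E[ g_{kj}(ℓ)·conj(g_{kj}(ℓ')) ] = ρ̃(ℓ) if ℓ = ℓ' and 0 otherwise, where ρ̃(i) = Σ_{t=0}^{L−1} ρ(t)·ρ(t−i). -/
open Finset MeasureTheory ProbabilityTheory

lemma my_integrable_conj {Ω : Type*} [MeasurableSpace Ω] {μ : Measure Ω} {f : Ω → ℂ}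
    (hf : Integrable f μ) : Integrable (fun ω => (starRingEnd ℂ) (f ω)) μ := by
  refine ⟨Complex.continuous_conj.comp_aestronglyMeasurable hf.1, ?_⟩
  have := hf.2
  simp only [HasFiniteIntegral, RCLike.enorm_conj] at this ⊢
  exact this

lemma my_indep_integral_mul {Ω : Type*} [MeasurableSpace Ω] {μ : Measure Ω}
    [IsProbabilityMeasure μ] {A B : Ω → ℂ} (hAB : IndepFun A B μ)
    (hA : Integrable A μ) (hB : Integrable B μ) :
    ∫ ω, A ω * B ω ∂μ = (∫ ω, A ω ∂μ) * ∫ ω, B ω ∂μ := by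
  have hABi : Integrable (fun ω => A ω * B ω) μ := hAB.integrable_mul hA hB
  have hmr : Measurable fun z : ℂ => z.re := Complex.measurable_re
  have hmi : Measurable fun z : ℂ => z.im := Complex.measurable_im
  have irr : IndepFun (fun ω => (A ω).re) (fun ω => (B ω).re) μ := hAB.comp hmr hmr
  have iri : IndepFun (fun ω => (A ω).re) (fun ω => (B ω).im) μ := hAB.comp hmr hmi
  have iir : IndepFun (fun ω => (A ω).im) (fun ω => (B ω).re) μ := hAB.comp hmi hmr
  have iii : IndepFun (fun ω => (A ω).im) (fun ω => (B ω).im) μ := hAB.comp hmi hmi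
  have e1 : ∫ ω, (A ω).re * (B ω).re ∂μ = (∫ ω, (A ω).re ∂μ) * ∫ ω, (B ω).re ∂μ :=
    irr.integral_fun_mul_eq_mul_integral hA.re.1 hB.re.1
  have e2 : ∫ ω, (A ω).re * (B ω).im ∂μ = (∫ ω, (A ω).re ∂μ) * ∫ ω, (B ω).im ∂μ :=
    iri.integral_fun_mul_eq_mul_integral hA.re.1 hB.im.1
  have e3 : ∫ ω, (A ω).im * (B ω).re ∂μ = (∫ ω, (A ω).im ∂μ) * ∫ ω, (B ω).re ∂μ :=
    iir.integral_fun_mul_eq_mul_integral hA.im.1 hB.re.1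
  have e4 : ∫ ω, (A ω).im * (B ω).im ∂μ = (∫ ω, (A ω).im ∂μ) * ∫ ω, (B ω).im ∂μ :=
    iii.integral_fun_mul_eq_mul_integral hA.im.1 hB.im.1
  have i1 : Integrable (fun ω => (A ω).re * (B ω).re) μ := irr.integrable_mul hA.re hB.re
  have i2 : Integrable (fun ω => (A ω).re * (B ω).im) μ := iri.integrable_mul hA.re hB.im
  have i3 : Integrable (fun ω => (A ω).im * (B ω).re) μ := iir.integrable_mul hA.im hB.re
  have i4 : Integrable (fun ω => (A ω).im * (B ω).im) μ := iii.integrable_mul hA.im hB.im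
  have hre : ∫ ω, (A ω * B ω).re ∂μ
      = (∫ ω, (A ω).re ∂μ) * (∫ ω, (B ω).re ∂μ)
        - (∫ ω, (A ω).im ∂μ) * (∫ ω, (B ω).im ∂μ) := by
    have heq : (fun ω => (A ω * B ω).re)
        = fun ω => (A ω).re * (B ω).re - (A ω).im * (B ω).im := by
      funext ω; simp [Complex.mul_re]
    rw [heq, integral_sub i1 i4, e1, e4]
  have him : ∫ ω, (A ω * B ω).im ∂μ
      = (∫ ω, (A ω).re ∂μ) * (∫ ω, (B ω).im ∂μ)
        + (∫ ω, (A ω).im ∂μ) * (∫ ω, (B ω).re ∂μ) := by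
    have heq : (fun ω => (A ω * B ω).im)
        = fun ω => (A ω).re * (B ω).im + (A ω).im * (B ω).re := by
      funext ω; simp [Complex.mul_im]
    rw [heq, integral_add i2 i3, e2, e3]
  have rAB : (∫ ω, A ω * B ω ∂μ).re = ∫ ω, (A ω * B ω).re ∂μ := by
    simpa using (integral_re hABi).symm
  have iAB : (∫ ω, A ω * B ω ∂μ).im = ∫ ω, (A ω * B ω).im ∂μ := by
    simpa using (integral_im hABi).symm
  have rA : (∫ ω, A ω ∂μ).re = ∫ ω, (A ω).re ∂μ := by simpa using (integral_re hA).symm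
  have iA : (∫ ω, A ω ∂μ).im = ∫ ω, (A ω).im ∂μ := by simpa using (integral_im hA).symm
  have rB : (∫ ω, B ω ∂μ).re = ∫ ω, (B ω).re ∂μ := by simpa using (integral_re hB).symm
  have iB : (∫ ω, B ω ∂μ).im = ∫ ω, (B ω).im ∂μ := by simpa using (integral_im hB).symm
  apply Complex.ext
  · rw [rAB, hre, Complex.mul_re, rA, iA, rB, iB]
  · rw [iAB, him, Complex.mul_im, rA, iA, rB, iB]


/-- Time-reversal effective channel between users `k` and `j`:
`g_{kj}(ℓ) = (1/√M)·∑_{m=0}^{M-1} ∑_{t∈ℤ} h_{m,j}(t)·conj(h_{m,k}(t-ℓ))`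
(the taps vanish outside `{0,…,L-1}`, so the sum over `t` reduces to `0 ≤ t ≤ L-1`). -/
noncomputable def gTR {Ω υ : Type*} (M L : ℕ) (h : ℕ → υ → ℤ → Ω → ℂ)
    (k j : υ) (ℓ : ℤ) (ω : Ω) : ℂ :=
  (1 / ((Real.sqrt M : ℝ) : ℂ)) * ∑ m ∈ range M, ∑ t ∈ Finset.Icc (0 : ℤ) ((L : ℤ) - 1),
    h m j t ω * (starRingEnd ℂ) (h m k (t - ℓ) ω)

/-- PDP autocorrelation `ρ̃(i) = ∑_{t=0}^{L-1} ρ(t)·ρ(t-i)`. -/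
noncomputable def rhoTilde (L : ℕ) (ρ : ℤ → ℝ) (i : ℤ) : ℝ :=
  ∑ t ∈ Finset.Icc (0 : ℤ) ((L : ℤ) - 1), ρ t * ρ (t - i)

/-- Equation (20), cross-user case (`k ≠ j`): covariance of the time-reversal
effective channel, `E[g_{kj}(ℓ)·conj(g_{kj}(ℓ'))] = ρ̃(ℓ)·𝟙[ℓ = ℓ']`. -/
theorem stmt8 {Ω υ : Type*} [MeasurableSpace Ω] (μ : Measure Ω) [IsProbabilityMeasure μ]
    [DecidableEq υ]
    (N L : ℕ) (hL1 : 1 ≤ L) (hLN : L ≤ N)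
    (ρ : ℤ → ℝ) (hρsupp : ∀ t : ℤ, (t < 0 ∨ (L : ℤ) ≤ t) → ρ t = 0)
    (hnn : ∀ t, 0 ≤ ρ t) (hsum : ∑ t ∈ Finset.Icc (0 : ℤ) ((L : ℤ) - 1), ρ t = 1)
    (M : ℕ) (hM : 1 ≤ M) (k j : υ) (hkj : k ≠ j)
    (h : ℕ → υ → ℤ → Ω → ℂ)
    (hsupp : ∀ m u (t : ℤ), (t < 0 ∨ (L : ℤ) ≤ t) → ∀ ω, h m u t ω = 0)
    (hint : ∀ m u t m' u' t', m < M → m' < M →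
      Integrable (fun ω => h m u t ω * (starRingEnd ℂ) (h m' u' t' ω)) μ)
    (hmean : ∀ m u t, m < M → ∫ ω, h m u t ω ∂μ = 0)
    (hcov : ∀ m u t m' u' t', m < M → m' < M →
      ∫ ω, h m u t ω * (starRingEnd ℂ) (h m' u' t' ω) ∂μ
        = if m = m' ∧ u = u' ∧ t = t' then ((ρ t : ℝ) : ℂ) else 0)
    (hindep : IndepFun (fun ω => fun mt : ℕ × ℤ => h mt.1 k mt.2 ω)
      (fun ω => fun mt : ℕ × ℤ => h mt.1 j mt.2 ω) μ)
    (hint4 : ∀ m₁ u₁ t₁ m₂ u₂ t₂ m₃ u₃ t₃ m₄ u₄ t₄,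
      Integrable (fun ω => h m₁ u₁ t₁ ω * (starRingEnd ℂ) (h m₂ u₂ t₂ ω) *
        h m₃ u₃ t₃ ω * (starRingEnd ℂ) (h m₄ u₄ t₄ ω)) μ) :
    ∀ ℓ ∈ Finset.Icc (-(L : ℤ) + 1) ((L : ℤ) - 1),
      ∀ ℓ' ∈ Finset.Icc (-(L : ℤ) + 1) ((L : ℤ) - 1),
        ∫ ω, gTR M L h k j ℓ ω * (starRingEnd ℂ) (gTR M L h k j ℓ' ω) ∂μ
          = if ℓ = ℓ' then ((rhoTilde L ρ ℓ : ℝ) : ℂ) else 0 := by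
  intro ℓ _ ℓ' _
  have hMC : (M:ℂ) ≠ 0 := by
    exact_mod_cast Nat.cast_ne_zero.mpr (Nat.one_le_iff_ne_zero.mp hM)
  set I : Finset ℤ := Finset.Icc (0:ℤ) ((L:ℤ)-1) with hIdef
  set T : ℕ → ℤ → ℕ → ℤ → Ω → ℂ := fun m t m' t' ω =>
    h m j t ω * (starRingEnd ℂ) (h m k (t - ℓ) ω) *
      ((starRingEnd ℂ) (h m' j t' ω) * h m' k (t' - ℓ') ω) with hTdef
  -- integrability of the generic fourth-order term
  have hTint : ∀ m t m' t', Integrable (T m t m' t') μ := by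
    intro m t m' t'
    refine (hint4 m j t m k (t-ℓ) m' k (t'-ℓ') m' j t').congr (ae_of_all μ fun ω => ?_)
    simp only [hTdef]; ring
  -- per-term integral
  have key : ∀ m m' : ℕ, m < M → m' < M → ∀ t t' : ℤ,
      ∫ ω, T m t m' t' ω ∂μ
        = (if m = m' ∧ t = t' then ((ρ t :ℝ):ℂ) else 0) *
          (if m = m' ∧ t - ℓ = t' - ℓ' then ((ρ (t-ℓ):ℝ):ℂ) else 0) := by
    intro m m' hm hm' t t'
    have hTeq : ∀ ω, T m t m' t' ω
        = (h m j t ω * (starRingEnd ℂ) (h m' j t' ω)) *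
          ((starRingEnd ℂ) (h m k (t-ℓ) ω) * h m' k (t'-ℓ') ω) := fun ω => by
      simp only [hTdef]; ring
    have hiA : Integrable (fun ω => h m j t ω * (starRingEnd ℂ) (h m' j t' ω)) μ :=
      hint m j t m' j t' hm hm'
    have hiB : Integrable (fun ω => (starRingEnd ℂ) (h m k (t-ℓ) ω) * h m' k (t'-ℓ') ω) μ := by
      refine (my_integrable_conj (hint m k (t-ℓ) m' k (t'-ℓ') hm hm')).congr
        (ae_of_all μ fun ω => ?_)
      simp only [map_mul, Complex.conj_conj]
    have hφA : Measurable fun f : ℕ × ℤ → ℂ => f (m, t) * (starRingEnd ℂ) (f (m', t')) :=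
      (measurable_pi_apply (m,t)).mul
        (Complex.continuous_conj.measurable.comp (measurable_pi_apply (m', t')))
    have hφB : Measurable fun f : ℕ × ℤ → ℂ =>
        (starRingEnd ℂ) (f (m, t-ℓ)) * f (m', t'-ℓ') :=
      (Complex.continuous_conj.measurable.comp (measurable_pi_apply (m, t-ℓ))).mul
        (measurable_pi_apply (m', t'-ℓ'))
    have hindAB : IndepFun (fun ω => h m j t ω * (starRingEnd ℂ) (h m' j t' ω))
        (fun ω => (starRingEnd ℂ) (h m k (t-ℓ) ω) * h m' k (t'-ℓ') ω) μ :=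
      (hindep.comp hφB hφA).symm
    have hEA : ∫ ω, h m j t ω * (starRingEnd ℂ) (h m' j t' ω) ∂μ
        = if m = m' ∧ t = t' then ((ρ t :ℝ):ℂ) else 0 := by
      rw [hcov m j t m' j t' hm hm']; simp
    have hEB : ∫ ω, (starRingEnd ℂ) (h m k (t-ℓ) ω) * h m' k (t'-ℓ') ω ∂μ
        = if m = m' ∧ t - ℓ = t' - ℓ' then ((ρ (t-ℓ):ℝ):ℂ) else 0 := by
      have : (fun ω => (starRingEnd ℂ) (h m k (t-ℓ) ω) * h m' k (t'-ℓ') ω)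
          = fun ω => (starRingEnd ℂ) (h m k (t-ℓ) ω * (starRingEnd ℂ) (h m' k (t'-ℓ') ω)) := by
        funext ω; simp only [map_mul, Complex.conj_conj]
      rw [this, integral_conj, hcov m k (t-ℓ) m' k (t'-ℓ') hm hm',
        apply_ite (starRingEnd ℂ)]
      simp [Complex.conj_ofReal]
    calc ∫ ω, T m t m' t' ω ∂μ
        = ∫ ω, (h m j t ω * (starRingEnd ℂ) (h m' j t' ω)) *
            ((starRingEnd ℂ) (h m k (t-ℓ) ω) * h m' k (t'-ℓ') ω) ∂μ := by
          simp only [hTeq]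
      _ = _ := by rw [my_indep_integral_mul hindAB hiA hiB, hEA, hEB]
  -- pointwise expansion of the product
  have hc : (1 / ((Real.sqrt M :ℝ):ℂ)) * (1 / ((Real.sqrt M :ℝ):ℂ)) = 1/(M:ℂ) := by
    rw [div_mul_div_comm, one_mul, ← Complex.ofReal_mul,
      Real.mul_self_sqrt (Nat.cast_nonneg M), Complex.ofReal_natCast]
  have expand : ∀ ω : Ω, gTR M L h k j ℓ ω * (starRingEnd ℂ) (gTR M L h k j ℓ' ω)
      = (1/(M:ℂ)) * ∑ m' ∈ range M, ∑ t' ∈ I, ∑ m ∈ range M, ∑ t ∈ I, T m t m' t' ω := by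
    intro ω
    simp only [gTR, map_mul, map_sum, map_div₀, map_one, Complex.conj_ofReal,
      Complex.conj_conj, ← hIdef]
    rw [mul_mul_mul_comm, hc]
    congr 1
    simp only [Finset.sum_mul, Finset.mul_sum, hTdef]
  -- integrate term by term
  have i1 : ∀ m' t' m, Integrable (fun ω => ∑ t ∈ I, T m t m' t' ω) μ :=
    fun m' t' m => integrable_finset_sum _ fun t _ => hTint m t m' t'
  have i2 : ∀ m' t', Integrable (fun ω => ∑ m ∈ range M, ∑ t ∈ I, T m t m' t' ω) μ :=
    fun m' t' => integrable_finset_sum _ fun m _ => i1 m' t' m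
  have i3 : ∀ m', Integrable (fun ω => ∑ t' ∈ I, ∑ m ∈ range M, ∑ t ∈ I, T m t m' t' ω) μ :=
    fun m' => integrable_finset_sum _ fun t' _ => i2 m' t'
  have step1 : ∫ ω, gTR M L h k j ℓ ω * (starRingEnd ℂ) (gTR M L h k j ℓ' ω) ∂μ
      = (1/(M:ℂ)) * ∑ m' ∈ range M, ∑ t' ∈ I, ∑ m ∈ range M, ∑ t ∈ I,
          ∫ ω, T m t m' t' ω ∂μ := by
    simp only [expand]
    rw [integral_const_mul]
    congr 1
    rw [integral_finset_sum _ fun m' _ => i3 m']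
    refine Finset.sum_congr rfl fun m' _ => ?_
    rw [integral_finset_sum _ fun t' _ => i2 m' t']
    refine Finset.sum_congr rfl fun t' _ => ?_
    rw [integral_finset_sum _ fun m _ => i1 m' t' m]
    refine Finset.sum_congr rfl fun m _ => ?_
    rw [integral_finset_sum _ fun t _ => hTint m t m' t']
  rw [step1]
  have step2 : ∑ m' ∈ range M, ∑ t' ∈ I, ∑ m ∈ range M, ∑ t ∈ I, ∫ ω, T m t m' t' ω ∂μ
      = ∑ m' ∈ range M, ∑ t' ∈ I, ∑ m ∈ range M, ∑ t ∈ I,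
          (if m = m' ∧ t = t' then ((ρ t :ℝ):ℂ) else 0) *
          (if m = m' ∧ t - ℓ = t' - ℓ' then ((ρ (t-ℓ):ℝ):ℂ) else 0) := by
    refine Finset.sum_congr rfl fun m' hm' => Finset.sum_congr rfl fun t' _ =>
      Finset.sum_congr rfl fun m hm => Finset.sum_congr rfl fun t _ => ?_
    exact key m m' (mem_range.mp hm) (mem_range.mp hm') t t'
  rw [step2]
  have inner1 : ∀ m m' : ℕ, ∀ t' ∈ I, ∑ t ∈ I,
      (if m = m' ∧ t = t' then ((ρ t:ℝ):ℂ) else 0) *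
      (if m = m' ∧ t - ℓ = t' - ℓ' then ((ρ (t-ℓ):ℝ):ℂ) else 0)
      = if m = m' ∧ ℓ = ℓ' then ((ρ t':ℝ):ℂ) * ((ρ (t'-ℓ):ℝ):ℂ) else 0 := by
    intro m m' t' ht'
    rw [Finset.sum_eq_single t']
    · by_cases h1 : m = m'
      · by_cases h2 : ℓ = ℓ'
        · simp [h1, h2]
        · have hne : ¬ (t' - ℓ = t' - ℓ') := by omega
          simp [h1, h2, hne]
      · simp [h1]
    · intro t _ hne
      simp [hne]
    · intro hmem; exact absurd ht' hmem
  have inner2 : ∀ m' ∈ range M, ∀ t' : ℤ, ∑ m ∈ range M,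
      (if m = m' ∧ ℓ = ℓ' then ((ρ t':ℝ):ℂ) * ((ρ (t'-ℓ):ℝ):ℂ) else 0)
      = if ℓ = ℓ' then ((ρ t':ℝ):ℂ) * ((ρ (t'-ℓ):ℝ):ℂ) else 0 := by
    intro m' hm' t'
    rw [Finset.sum_eq_single m']
    · simp
    · intro m _ hne
      simp [hne]
    · intro hmem; exact absurd hm' hmem
  have step3 : ∑ m' ∈ range M, ∑ t' ∈ I, ∑ m ∈ range M, ∑ t ∈ I,
      (if m = m' ∧ t = t' then ((ρ t :ℝ):ℂ) else 0) *
      (if m = m' ∧ t - ℓ = t' - ℓ' then ((ρ (t-ℓ):ℝ):ℂ) else 0)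
      = ∑ m' ∈ range M, ∑ t' ∈ I, (if ℓ = ℓ' then ((ρ t':ℝ):ℂ) * ((ρ (t'-ℓ):ℝ):ℂ) else 0) := by
    refine Finset.sum_congr rfl fun m' hm' => Finset.sum_congr rfl fun t' ht' => ?_
    rw [Finset.sum_congr rfl fun m _ => inner1 m m' t' ht', inner2 m' hm' t']
  rw [step3]
  by_cases hll : ℓ = ℓ'
  · subst hll
    have hsum' : ∑ t' ∈ I, ((ρ t':ℝ):ℂ) * ((ρ (t'-ℓ):ℝ):ℂ) = ((rhoTilde L ρ ℓ :ℝ):ℂ) := by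
      unfold rhoTilde
      rw [← hIdef]
      push_cast
      rfl
    simp only [if_pos rfl, Finset.sum_const, card_range, nsmul_eq_mul, hsum']
    field_simp
    exact hsum' 
  · simp [hll]
end
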